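/- For every positive integer m, every positive even integer n satisfies D_m(n) < n. -/

import Mathlib

open Finset

/-- The Schemmel totient function: `L m 0 = 0`, `L m 1 = 1`, and for `n > 1`,
`L m n = ∏ p^(α-1) (p - m)` over the canonical factorization of `n` if every
prime divisor of `n` exceeds `m`, and `0` otherwise. -/
def L (m n : ℕ) : ℕ :=
  if n ≤ 1 then n
  else if ∀ p ∈ n.primeFactors, m < p then
    ∏ p ∈ n.primeFactors, p ^ (n.factorization p - 1) * (p - m)
  else 0

/-- `R m n` is the least positive `k` with `L_m^{(k)}(n) ∈ {0, 1}`. -/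
noncomputable def R (m n : ℕ) : ℕ :=
  sInf {k | 0 < k ∧ ((L m)^[k] n = 0 ∨ (L m)^[k] n = 1)}

/-- `H m n = L_m^{(R_m(n))}(n)`. -/
noncomputable def H (m n : ℕ) : ℕ := (L m)^[R m n] n

/-- `D m 1 = 0` and `D m n = ∑_{i=1}^{R_m(n)} L_m^{(i)}(n)` for `n > 1`. -/
noncomputable def D (m n : ℕ) : ℕ :=
  if n = 1 then 0 else ∑ i ∈ Finset.Icc 1 (R m n), (L m)^[i] n

lemma L_one (n : ℕ) : L 1 n = n.totient := by
  unfold L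
  rcases le_or_gt n 1 with h | h
  · interval_cases n <;> simp
  · rw [if_neg (by omega), if_pos]
    · rw [Nat.totient_eq_prod_factorization (by omega), Finsupp.prod,
        Nat.support_factorization]
    · intro p hp
      exact (Nat.prime_of_mem_primeFactors hp).one_lt

lemma L_zero_of_two_le {m n : ℕ} (hm : 2 ≤ m) (hn : 1 < n) (he : Even n) :
    L m n = 0 := by
  unfold L
  rw [if_neg (by omega), if_neg]
  push_neg
  refine ⟨2, ?_, by omega⟩
  exact Nat.mem_primeFactors.mpr ⟨Nat.prime_two, he.two_dvd, by omega⟩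

lemma R_eq_one {m n : ℕ} (h : L m n = 0 ∨ L m n = 1) : R m n = 1 := by
  have h1 : 1 ∈ {k | 0 < k ∧ ((L m)^[k] n = 0 ∨ (L m)^[k] n = 1)} := by
    simpa using h
  refine le_antisymm (Nat.sInf_le h1) ?_
  rw [Nat.one_le_iff_ne_zero]
  intro h0
  rcases Nat.sInf_eq_zero.mp h0 with h2 | h2
  · exact absurd h2.1 (lt_irrefl 0)
  · rw [h2] at h1; exact h1

lemma D_of_small {m n : ℕ} (hn : n ≠ 1) (h : L m n = 0 ∨ L m n = 1) :
    D m n = L m n := by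
  unfold D
  rw [if_neg hn, R_eq_one h]
  simp

lemma R_rec {m n : ℕ} (ht : 1 < L m n)
    (hne : ∃ k, 0 < k ∧ ((L m)^[k] (L m n) = 0 ∨ (L m)^[k] (L m n) = 1)) :
    R m n = R m (L m n) + 1 := by
  set t := L m n with htdef
  have hr : R m t ∈ {k | 0 < k ∧ ((L m)^[k] t = 0 ∨ (L m)^[k] t = 1)} :=
    Nat.sInf_mem hne
  have hmem : R m t + 1 ∈ {k | 0 < k ∧ ((L m)^[k] n = 0 ∨ (L m)^[k] n = 1)} := by
    refine ⟨Nat.succ_pos _, ?_⟩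
    rw [Function.iterate_succ_apply, ← htdef]
    exact hr.2
  refine le_antisymm (Nat.sInf_le hmem) ?_
  refine le_csInf ⟨_, hmem⟩ ?_
  rintro k ⟨hk, hk2⟩
  obtain ⟨j, rfl⟩ := Nat.exists_eq_succ_of_ne_zero hk.ne'
  rw [Function.iterate_succ_apply, ← htdef] at hk2
  rcases Nat.eq_zero_or_pos j with rfl | hj
  · simp at hk2; omega
  · have : R m t ≤ j := Nat.sInf_le ⟨hj, hk2⟩
    omega

lemma sum_Icc_one_shift (f : ℕ → ℕ) (k : ℕ) :
    ∑ i ∈ Finset.Icc 1 k, f i = ∑ i ∈ Finset.range k, f (i + 1) := by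
  induction k with
  | zero => simp
  | succ k ih =>
      rw [Finset.sum_Icc_succ_top (Nat.le_add_left 1 k), ih, Finset.sum_range_succ]

lemma D_rec {m n : ℕ} (hn : 1 < n) (ht : 1 < L m n)
    (hne : ∃ k, 0 < k ∧ ((L m)^[k] (L m n) = 0 ∨ (L m)^[k] (L m n) = 1)) :
    D m n = L m n + D m (L m n) := by
  unfold D
  rw [if_neg (by omega), if_neg (by omega), R_rec ht hne,
    sum_Icc_one_shift, sum_Icc_one_shift, Finset.sum_range_succ']
  simp only [Function.iterate_succ_apply, Function.iterate_one, Function.iterate_zero_apply]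
  omega

lemma exists_iter_one (n : ℕ) :
    ∃ k, 0 < k ∧ ((L 1)^[k] n = 0 ∨ (L 1)^[k] n = 1) := by
  induction n using Nat.strong_induction_on with
  | _ n ih =>
    rcases le_or_gt n 1 with h | h
    · refine ⟨1, one_pos, ?_⟩
      simp only [Function.iterate_one, L_one]
      interval_cases n <;> simp
    · have hlt : n.totient < n := Nat.totient_lt n h
      obtain ⟨k, hk, hk2⟩ := ih n.totient hlt
      refine ⟨k + 1, Nat.succ_pos _, ?_⟩
      rwa [Function.iterate_succ_apply, L_one]

lemma two_totient_le {n : ℕ} (he : Even n) : 2 * n.totient ≤ n := by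
  induction n using Nat.strong_induction_on with
  | _ n ih =>
    obtain ⟨k, rfl⟩ := he
    rcases Nat.eq_zero_or_pos k with rfl | hk
    · simp
    have hkk : k + k = 2 * k := by ring
    rcases Nat.even_or_odd k with hke | hko
    · have h2 : Nat.totient (2 * k) = 2 * Nat.totient k :=
        Nat.totient_mul_of_prime_of_dvd Nat.prime_two hke.two_dvd
      have := ih k (by omega) hke
      rw [hkk, h2]; omega
    · have hcop : Nat.Coprime 2 k := (Nat.coprime_two_left).mpr hko
      have h2 : Nat.totient (2 * k) = Nat.totient k := by
        rw [Nat.totient_mul hcop, Nat.totient_two, one_mul]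
      have := Nat.totient_le k
      rw [hkk, h2]; omega

lemma D_one_lt (n : ℕ) (hn : 0 < n) (he : Even n) : D 1 n < n := by
  induction n using Nat.strong_induction_on with
  | _ n ih =>
    have hn2 : 2 ≤ n := by
      rcases he with ⟨k, rfl⟩; omega
    have hL : L 1 n = n.totient := L_one n
    have htpos : 0 < n.totient := Nat.totient_pos.mpr hn
    rcases le_or_gt n.totient 1 with h1 | h1
    · have : n.totient = 1 := by omega
      rw [D_of_small (by omega) (by omega), hL, this]; omega
    · have h2t : 2 * n.totient ≤ n := two_totient_le he
      have hlt : n.totient < n := by omega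
      have hteven : Even n.totient := Nat.totient_even (by
        by_contra h
        have : n = 2 := by omega
        subst this; simp [Nat.totient_two] at h1)
      have hD : D 1 n.totient < n.totient := ih n.totient hlt htpos hteven
      have hrec : D 1 n = L 1 n + D 1 (L 1 n) := by
        refine D_rec (by omega) (by omega) ?_
        rw [hL]; exact exists_iter_one n.totient
      rw [hrec, hL]
      omega

theorem Dm_deficient_of_even (m : ℕ) (hm : 0 < m) :
    ∀ n : ℕ, 0 < n → Even n → D m n < n := by
  intro n hn he
  have hn2 : 2 ≤ n := by rcases he with ⟨k, rfl⟩; omega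
  rcases eq_or_lt_of_le (show 1 ≤ m from hm) with h1 | h2
  · rw [← h1]; exact D_one_lt n hn he
  · have hL : L m n = 0 := L_zero_of_two_le h2 (by omega) he
    rw [D_of_small (by omega) (Or.inl hL), hL]
    omega
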